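/- Conjugation by the Fricke matrix J₂ maps Γ₂(2,4) onto the group of γ ∈ Sp(4,ℤ) with A ≡ D ≡ 1 (mod 2), C ≡ 0 (mod 4), diag(C) ≡ 0 (mod 8), and diag(B) ≡ 0 (mod 2). -/

import Mathlib

open Matrix

/-- The Fricke matrix J₂ = (1/√2)·(0 1₂; -2·1₂ 0) ∈ Sp(4,ℝ). -/
noncomputable def FrickeJ2 : Matrix (Fin 2 ⊕ Fin 2) (Fin 2 ⊕ Fin 2) ℝ :=
  (Real.sqrt 2)⁻¹ • Matrix.fromBlocks 0 1 (-(2 : ℝ) • (1 : Matrix (Fin 2) (Fin 2) ℝ)) 0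

/-- Γ₂(2,4) = {γ ∈ Sp(4,ℤ) : γ ≡ 1 (mod 2), diag(B) ≡ diag(C) ≡ 0 (mod 4)}. -/
def Gamma2_24 : Set (Matrix (Fin 2 ⊕ Fin 2) (Fin 2 ⊕ Fin 2) ℤ) :=
  {γ | γ ∈ Matrix.symplecticGroup (Fin 2) ℤ ∧
    (∀ i j, (2 : ℤ) ∣ (γ i j - (1 : Matrix (Fin 2 ⊕ Fin 2) (Fin 2 ⊕ Fin 2) ℤ) i j)) ∧
    (∀ i : Fin 2, (4 : ℤ) ∣ γ (Sum.inl i) (Sum.inr i)) ∧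
    (∀ i : Fin 2, (4 : ℤ) ∣ γ (Sum.inr i) (Sum.inl i))}

/-- The group {γ ∈ Sp(4,ℤ) : A ≡ D ≡ 1 (mod 2), C ≡ 0 (mod 4), diag(C) ≡ 0 (mod 8),
diag(B) ≡ 0 (mod 2)}. -/
def Gamma2_24_J2 : Set (Matrix (Fin 2 ⊕ Fin 2) (Fin 2 ⊕ Fin 2) ℤ) :=
  {γ | γ ∈ Matrix.symplecticGroup (Fin 2) ℤ ∧
    (∀ i j : Fin 2, (2 : ℤ) ∣ (γ (Sum.inl i) (Sum.inl j) - (1 : Matrix (Fin 2) (Fin 2) ℤ) i j)) ∧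
    (∀ i j : Fin 2, (2 : ℤ) ∣ (γ (Sum.inr i) (Sum.inr j) - (1 : Matrix (Fin 2) (Fin 2) ℤ) i j)) ∧
    (∀ i j : Fin 2, (4 : ℤ) ∣ γ (Sum.inr i) (Sum.inl j)) ∧
    (∀ i : Fin 2, (8 : ℤ) ∣ γ (Sum.inr i) (Sum.inl i)) ∧
    (∀ i : Fin 2, (2 : ℤ) ∣ γ (Sum.inl i) (Sum.inr i))}

/-- The image of a set of integral matrices under conjugation by the Fricke matrix. -/
noncomputable def frickeConj (S : Set (Matrix (Fin 2 ⊕ Fin 2) (Fin 2 ⊕ Fin 2) ℤ)) :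
    Set (Matrix (Fin 2 ⊕ Fin 2) (Fin 2 ⊕ Fin 2) ℤ) :=
  {M | ∃ γ ∈ S, M.map (Int.cast : ℤ → ℝ) =
    FrickeJ2 * γ.map (Int.cast : ℤ → ℝ) * FrickeJ2⁻¹}

/-- An explicit form of the inverse of the Fricke matrix. -/
noncomputable def J2i : Matrix (Fin 2 ⊕ Fin 2) (Fin 2 ⊕ Fin 2) ℝ :=
  Real.sqrt 2 • Matrix.fromBlocks 0 (-(2:ℝ)⁻¹ • 1) 1 0

lemma J2_mul_J2i : FrickeJ2 * J2i = 1 := by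
  rw [FrickeJ2, J2i, smul_mul_assoc, mul_smul_comm, smul_smul,
    inv_mul_cancel₀ (by positivity : Real.sqrt 2 ≠ 0), one_smul, fromBlocks_multiply]
  simp [Matrix.smul_mul, Matrix.mul_smul, smul_smul, ← Matrix.fromBlocks_one]

lemma J2_inv : FrickeJ2⁻¹ = J2i := Matrix.inv_eq_right_inv J2_mul_J2i

/-- Conjugation by J₂ on block matrices: (A B; C D) ↦ (D, -C/2; -2B, A). -/
noncomputable def conjJ (N : Matrix (Fin 2 ⊕ Fin 2) (Fin 2 ⊕ Fin 2) ℝ) :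
    Matrix (Fin 2 ⊕ Fin 2) (Fin 2 ⊕ Fin 2) ℝ :=
  Matrix.fromBlocks N.toBlocks₂₂ (-(2:ℝ)⁻¹ • N.toBlocks₂₁) (-(2:ℝ) • N.toBlocks₁₂) N.toBlocks₁₁

lemma conj_eq (N : Matrix (Fin 2 ⊕ Fin 2) (Fin 2 ⊕ Fin 2) ℝ) :
    FrickeJ2 * N * FrickeJ2⁻¹ = conjJ N := by
  rw [J2_inv]
  conv_lhs => rw [← fromBlocks_toBlocks N]
  rw [FrickeJ2, J2i, conjJ, smul_mul_assoc, smul_mul_assoc, mul_smul_comm, smul_smul,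
    inv_mul_cancel₀ (by positivity : Real.sqrt 2 ≠ 0), one_smul, fromBlocks_multiply,
    fromBlocks_multiply]
  simp [Matrix.smul_mul, Matrix.mul_smul, smul_smul]

lemma conj_conj (N : Matrix (Fin 2 ⊕ Fin 2) (Fin 2 ⊕ Fin 2) ℝ) : conjJ (conjJ N) = N := by
  rw [conjJ, conjJ]
  simp [toBlocks_fromBlocks₁₁, toBlocks_fromBlocks₁₂, toBlocks_fromBlocks₂₁,
    toBlocks_fromBlocks₂₂, smul_smul]
  norm_num [fromBlocks_toBlocks]

lemma J2_mem : FrickeJ2 ∈ Matrix.symplecticGroup (Fin 2) ℝ := by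
  rw [SymplecticGroup.mem_iff, FrickeJ2]
  rw [smul_mul_assoc, Matrix.transpose_smul, mul_smul_comm, smul_mul_assoc, smul_smul]
  rw [show (Real.sqrt 2)⁻¹ * (Real.sqrt 2)⁻¹ = (2:ℝ)⁻¹ by
    rw [← mul_inv, Real.mul_self_sqrt (by norm_num)]]
  rw [Matrix.J, fromBlocks_transpose, fromBlocks_multiply, fromBlocks_multiply, fromBlocks_smul]
  simp [Matrix.smul_mul, Matrix.mul_smul, smul_smul]

lemma J2i_mem : J2i ∈ Matrix.symplecticGroup (Fin 2) ℝ := by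
  rw [SymplecticGroup.mem_iff, J2i]
  rw [smul_mul_assoc, Matrix.transpose_smul, mul_smul_comm, smul_mul_assoc, smul_smul]
  rw [Real.mul_self_sqrt (by norm_num : (0:ℝ) ≤ 2)]
  rw [Matrix.J, fromBlocks_transpose, fromBlocks_multiply, fromBlocks_multiply, fromBlocks_smul]
  simp [Matrix.smul_mul, Matrix.mul_smul, smul_smul]

lemma conj_mem {N : Matrix (Fin 2 ⊕ Fin 2) (Fin 2 ⊕ Fin 2) ℝ}
    (h : N ∈ Matrix.symplecticGroup (Fin 2) ℝ) :
    conjJ N ∈ Matrix.symplecticGroup (Fin 2) ℝ := by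
  rw [← conj_eq, J2_inv]
  exact mul_mem (mul_mem J2_mem h) J2i_mem

lemma map_J : (Matrix.J (Fin 2) ℤ).map (Int.cast : ℤ → ℝ) = Matrix.J (Fin 2) ℝ := by
  rw [Matrix.J, Matrix.J]
  ext (i|i) (j|j) <;> simp [Matrix.fromBlocks, Matrix.one_apply]

lemma map_mem_sp {γ : Matrix (Fin 2 ⊕ Fin 2) (Fin 2 ⊕ Fin 2) ℤ} :
    γ ∈ Matrix.symplecticGroup (Fin 2) ℤ ↔
      γ.map (Int.cast : ℤ → ℝ) ∈ Matrix.symplecticGroup (Fin 2) ℝ := by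
  rw [SymplecticGroup.mem_iff, SymplecticGroup.mem_iff, ← _root_.map_J, ← Matrix.transpose_map,
    show (Int.cast : ℤ → ℝ) = ⇑(Int.castRingHom ℝ) from rfl, ← Matrix.map_mul, ← Matrix.map_mul]
  exact ⟨fun h => by rw [h], fun h => Matrix.map_injective Int.cast_injective h⟩

lemma conjJ_ll (N : Matrix (Fin 2 ⊕ Fin 2) (Fin 2 ⊕ Fin 2) ℝ) (i j : Fin 2) :
    conjJ N (Sum.inl i) (Sum.inl j) = N (Sum.inr i) (Sum.inr j) := by
  simp [conjJ, Matrix.toBlocks₂₂]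

lemma conjJ_lr (N : Matrix (Fin 2 ⊕ Fin 2) (Fin 2 ⊕ Fin 2) ℝ) (i j : Fin 2) :
    conjJ N (Sum.inl i) (Sum.inr j) = -(2:ℝ)⁻¹ * N (Sum.inr i) (Sum.inl j) := by
  simp [conjJ, Matrix.toBlocks₂₁]

lemma conjJ_rl (N : Matrix (Fin 2 ⊕ Fin 2) (Fin 2 ⊕ Fin 2) ℝ) (i j : Fin 2) :
    conjJ N (Sum.inr i) (Sum.inl j) = -(2:ℝ) * N (Sum.inl i) (Sum.inr j) := by
  simp [conjJ, Matrix.toBlocks₁₂]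

lemma conjJ_rr (N : Matrix (Fin 2 ⊕ Fin 2) (Fin 2 ⊕ Fin 2) ℝ) (i j : Fin 2) :
    conjJ N (Sum.inr i) (Sum.inr j) = N (Sum.inl i) (Sum.inl j) := by
  simp [conjJ, Matrix.toBlocks₁₁]

/-- Conjugation by J₂ maps Γ₂(2,4) onto the group of γ ∈ Sp(4,ℤ) with
A ≡ D ≡ 1 (mod 2), C ≡ 0 (mod 4), diag(C) ≡ 0 (mod 8) and diag(B) ≡ 0 (mod 2). -/
theorem fricke_image_of_gamma2_24 :
    frickeConj Gamma2_24 = Gamma2_24_J2 := by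
  ext M
  constructor
  · rintro ⟨γ, ⟨hsp, h2, hB4, hC4⟩, hM⟩
    rw [conj_eq] at hM
    have hll : ∀ i j : Fin 2, M (Sum.inl i) (Sum.inl j) = γ (Sum.inr i) (Sum.inr j) := by
      intro i j
      have h := congrFun (congrFun hM (Sum.inl i)) (Sum.inl j)
      rw [Matrix.map_apply, conjJ_ll, Matrix.map_apply] at h
      exact_mod_cast h
    have hrr : ∀ i j : Fin 2, M (Sum.inr i) (Sum.inr j) = γ (Sum.inl i) (Sum.inl j) := by
      intro i j
      have h := congrFun (congrFun hM (Sum.inr i)) (Sum.inr j)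
      rw [Matrix.map_apply, conjJ_rr, Matrix.map_apply] at h
      exact_mod_cast h
    have hrl : ∀ i j : Fin 2, M (Sum.inr i) (Sum.inl j) = -2 * γ (Sum.inl i) (Sum.inr j) := by
      intro i j
      have h := congrFun (congrFun hM (Sum.inr i)) (Sum.inl j)
      rw [Matrix.map_apply, conjJ_rl, Matrix.map_apply] at h
      exact_mod_cast h
    have hlr : ∀ i j : Fin 2,
        2 * M (Sum.inl i) (Sum.inr j) = -γ (Sum.inr i) (Sum.inl j) := by
      intro i j
      have h := congrFun (congrFun hM (Sum.inl i)) (Sum.inr j)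
      rw [Matrix.map_apply, conjJ_lr, Matrix.map_apply] at h
      have h2 : (2:ℝ) * (M (Sum.inl i) (Sum.inr j) : ℝ) =
          -(γ (Sum.inr i) (Sum.inl j) : ℝ) := by rw [h]; ring
      exact_mod_cast h2
    refine ⟨map_mem_sp.mpr (hM ▸ conj_mem (map_mem_sp.mp hsp)), ?_, ?_, ?_, ?_, ?_⟩
    · intro i j
      have h := h2 (Sum.inr i) (Sum.inr j)
      rw [hll]
      simpa [Matrix.one_apply] using h
    · intro i j
      have h := h2 (Sum.inl i) (Sum.inl j)
      rw [hrr]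
      simpa [Matrix.one_apply] using h
    · intro i j
      obtain ⟨k, hk⟩ := h2 (Sum.inl i) (Sum.inr j)
      simp [Matrix.one_apply] at hk
      rw [hrl]
      omega
    · intro i
      obtain ⟨k, hk⟩ := hB4 i
      rw [hrl]
      omega
    · intro i
      obtain ⟨k, hk⟩ := hC4 i
      have h := hlr i i
      omega
  · rintro ⟨hsp, hA2, hD2, hC4, hC8, hB2⟩
    obtain ⟨γ, hγ⟩ : ∃ g : Matrix (Fin 2 ⊕ Fin 2) (Fin 2 ⊕ Fin 2) ℤ,
        g = Matrix.fromBlocks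
          (Matrix.of fun i j => M (Sum.inr i) (Sum.inr j))
          (Matrix.of fun i j => -(M (Sum.inr i) (Sum.inl j) / 2))
          (Matrix.of fun i j => -2 * M (Sum.inl i) (Sum.inr j))
          (Matrix.of fun i j => M (Sum.inl i) (Sum.inl j)) := ⟨_, rfl⟩
    have heq : M.map (Int.cast : ℤ → ℝ) = conjJ (γ.map (Int.cast : ℤ → ℝ)) := by
      ext (i|i) (j|j)
      · rw [Matrix.map_apply, conjJ_ll, Matrix.map_apply, hγ]
        simp [Matrix.fromBlocks]
      · rw [Matrix.map_apply, conjJ_lr, Matrix.map_apply, hγ]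
        simp only [Matrix.fromBlocks, Sum.elim_inr, Sum.elim_inl, Matrix.of_apply]
        push_cast
        ring
      · rw [Matrix.map_apply, conjJ_rl, Matrix.map_apply, hγ]
        have h2 : (2:ℤ) ∣ M (Sum.inr i) (Sum.inl j) :=
          dvd_trans (by norm_num) (hC4 i j)
        have key : 2 * (M (Sum.inr i) (Sum.inl j) / 2) = M (Sum.inr i) (Sum.inl j) :=
          Int.mul_ediv_cancel' h2
        simp only [Matrix.fromBlocks, Sum.elim_inr, Sum.elim_inl, Matrix.of_apply]
        conv_lhs => rw [← key]
        push_cast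
        ring
      · rw [Matrix.map_apply, conjJ_rr, Matrix.map_apply, hγ]
        simp [Matrix.fromBlocks]
    refine ⟨γ, ⟨?_, ?_, ?_, ?_⟩, by rw [conj_eq]; exact heq⟩
    · -- symplectic
      have hg : γ.map (Int.cast : ℤ → ℝ) = conjJ (M.map (Int.cast : ℤ → ℝ)) := by
        conv_rhs => rw [heq, conj_conj]
      rw [map_mem_sp, hg]
      exact conj_mem (map_mem_sp.mp hsp)
    · -- ≡ 1 mod 2
      rintro (i|i) (j|j) <;> rw [hγ] <;>
        simp only [Matrix.fromBlocks, Sum.elim_inl, Sum.elim_inr, Matrix.of_apply,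
          Matrix.one_apply, Sum.inl.injEq, Sum.inr.injEq]
      · have h := hD2 i j
        rcases eq_or_ne i j with hij | hij <;>
          simp [Matrix.one_apply, hij] at h ⊢ <;> omega
      · obtain ⟨k, hk⟩ := hC4 i j
        simp only [reduceCtorEq, if_false]
        omega
      · simp only [reduceCtorEq, if_false]
        omega
      · have h := hA2 i j
        rcases eq_or_ne i j with hij | hij <;>
          simp [Matrix.one_apply, hij] at h ⊢ <;> omega
    · -- diag B ≡ 0 mod 4
      intro i
      obtain ⟨k, hk⟩ := hC8 i
      rw [hγ]
      simp only [Matrix.fromBlocks, Sum.elim_inl, Sum.elim_inr, Matrix.of_apply]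
      omega
    · -- diag C ≡ 0 mod 4
      intro i
      obtain ⟨k, hk⟩ := hB2 i
      rw [hγ]
      simp only [Matrix.fromBlocks, Sum.elim_inl, Sum.elim_inr, Matrix.of_apply]
      omega
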